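/- Let d ≥ 1 and let G_d = ℤ^d ⊣ ℤ be the comb graph with vertex set ℤ^d × ℤ and adjacency: (J,x) ∼ (J',x') if and only if either J = J' and |x − x'| = 1, or x = x' = 0 and Σ_{k=1}^d |J_k − J'_k| = 1. Let θ > 0 be determined by e^θ = d + √(d² + 1) (equivalently 2 cosh θ = 2√(d² + 1)). Then the function w : ℤ^d × ℤ → ℝ, w(J,x) = e^{−θ|x|}, is a Perron–Frobenius weight for the adjacency operator of G_d with eigenvalue 2√(d² + 1): for every (J,x), Σ_{(J',x') ∼ (J,x)} w(J',x') = 2√(d² + 1) · w(J,x), and w(J,x) > 0 for all (J,x). -/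

import Mathlib

/-- Adjacency of the comb graph `ℤ^d ⊣ ℤ`: `(J,x) ∼ (J',x')` iff `J = J'` and
`|x - x'| = 1`, or `x = x' = 0` and `Σ_k |J_k - J'_k| = 1`. -/
def CombAdj {d : ℕ} (p q : (Fin d → ℤ) × ℤ) : Prop :=
  (p.1 = q.1 ∧ |p.2 - q.2| = 1) ∨
    (p.2 = 0 ∧ q.2 = 0 ∧ (∑ k : Fin d, |p.1 k - q.1 k|) = 1)

-- auxiliary lemmas
lemma sum_abs_one {d : ℕ} (J J' : Fin d → ℤ)
    (h : ∑ k : Fin d, |J k - J' k| = 1) :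
    ∃ k : Fin d, ∃ b : Bool,
      J' = Function.update J k (J k + if b then 1 else -1) := by
  have hex : ∃ k : Fin d, J k ≠ J' k := by
    by_contra hc
    push_neg at hc
    simp [hc] at h
  obtain ⟨k, hk⟩ := hex
  have h1 : 1 ≤ |J k - J' k| := by
    rcases abs_cases (J k - J' k) with ⟨h', h''⟩ | ⟨h', h''⟩ <;> omega
  have hnn : (0:ℤ) ≤ ∑ k' ∈ Finset.univ.erase k, |J k' - J' k'| :=
    Finset.sum_nonneg fun i _ => abs_nonneg _
  have hsplit : ∑ k : Fin d, |J k - J' k|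
      = |J k - J' k| + ∑ k' ∈ Finset.univ.erase k, |J k' - J' k'| :=
    (Finset.add_sum_erase Finset.univ (fun k' => |J k' - J' k'|) (Finset.mem_univ k)).symm
  have hrest : ∑ k' ∈ Finset.univ.erase k, |J k' - J' k'| = 0 := by omega
  have hzero : ∀ k' ∈ Finset.univ.erase k, |J k' - J' k'| = 0 :=
    (Finset.sum_eq_zero_iff_of_nonneg (fun i _ => abs_nonneg (J i - J' i))).mp hrest
  have habs : |J k - J' k| = 1 := by omega
  have heq : ∀ k' : Fin d, k' ≠ k → J' k' = J k' := by
    intro k' hkk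
    have := abs_eq_zero.mp (hzero k' (Finset.mem_erase.mpr ⟨hkk, Finset.mem_univ k'⟩))
    omega
  rcases (abs_eq (by norm_num : (0:ℤ) ≤ 1)).mp habs with h' | h'
  · refine ⟨k, false, funext fun k' => ?_⟩
    by_cases hkk : k' = k
    · subst hkk; simp; omega
    · simp [Function.update_of_ne hkk, heq k' hkk]
  · refine ⟨k, true, funext fun k' => ?_⟩
    by_cases hkk : k' = k
    · subst hkk; simp; omega
    · simp [Function.update_of_ne hkk, heq k' hkk]

lemma sum_abs_update {d : ℕ} (J : Fin d → ℤ) (k : Fin d) (b : Bool) :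
    ∑ k' : Fin d, |J k' - Function.update J k (J k + if b then 1 else -1) k'| = 1 := by
  rw [Finset.sum_eq_single k]
  · cases b <;> simp
  · intro k' _ hkk
    simp [Function.update_of_ne hkk]
  · simp

/-- The function `w(J,x) = e^{-θ|x|}`, with `e^θ = d + √(d² + 1)`, is a strictly
positive Perron–Frobenius weight for the adjacency operator of the comb graph
`ℤ^d ⊣ ℤ` with eigenvalue `2√(d² + 1)`:
`Σ_{q ∼ p} w(q) = 2√(d² + 1) · w(p)` for every vertex `p`. -/
theorem stmt_12 (d : ℕ) (hd : 1 ≤ d) (θ : ℝ) (hθ : 0 < θ)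
    (hθeq : Real.exp θ = d + Real.sqrt (d ^ 2 + 1)) :
    (∀ p : (Fin d → ℤ) × ℤ, 0 < Real.exp (-θ * |(p.2 : ℝ)|)) ∧
    ∀ p : (Fin d → ℤ) × ℤ,
      ∑ᶠ q ∈ {q : (Fin d → ℤ) × ℤ | CombAdj p q},
        Real.exp (-θ * |(q.2 : ℝ)|) =
      2 * Real.sqrt (d ^ 2 + 1) * Real.exp (-θ * |(p.2 : ℝ)|) := by
  have hsq : Real.sqrt ((d:ℝ) ^ 2 + 1) ^ 2 = (d:ℝ) ^ 2 + 1 :=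
    Real.sq_sqrt (by positivity)
  have hexpneg : Real.exp (-θ) = Real.sqrt ((d:ℝ) ^ 2 + 1) - d := by
    have hmul : (Real.sqrt ((d:ℝ) ^ 2 + 1) - d) * Real.exp θ = 1 := by
      rw [hθeq]; nlinarith [hsq]
    rw [Real.exp_neg]
    exact (eq_inv_of_mul_eq_one_left hmul).symm
  have hcosh : Real.exp θ + Real.exp (-θ) = 2 * Real.sqrt ((d:ℝ) ^ 2 + 1) := by
    rw [hθeq, hexpneg]; ring
  refine ⟨fun p => Real.exp_pos _, ?_⟩
  rintro ⟨J, x⟩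
  by_cases hx : x = 0
  · subst hx
    set f : Fin d × Bool → (Fin d → ℤ) × ℤ :=
      fun kb => (Function.update J kb.1 (J kb.1 + if kb.2 then 1 else -1), 0) with hf
    have hinj : Function.Injective f := by
      rintro ⟨k, b⟩ ⟨k', b'⟩ hfe
      have h1 : Function.update J k (J k + if b then 1 else -1)
          = Function.update J k' (J k' + if b' then 1 else -1) := congrArg Prod.fst hfe
      by_cases hkk : k = k'
      · subst hkk
        have h2 := congrFun h1 k
        simp only [Function.update_self] at h2
        cases b <;> cases b' <;> simp_all
      · exfalso
        have h2 := congrFun h1 k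
        rw [Function.update_self, Function.update_of_ne hkk] at h2
        cases b <;> simp at h2 <;> omega
    have hset : {q : (Fin d → ℤ) × ℤ | CombAdj (J, 0) q}
        = ↑(insert (J, (1:ℤ)) (insert (J, (-1:ℤ)) (Finset.image f Finset.univ))) := by
      ext q
      simp only [Set.mem_setOf_eq, CombAdj, Finset.coe_insert, Set.mem_insert_iff,
        Finset.coe_image, Finset.coe_univ, Set.image_univ, Set.mem_range]
      constructor
      · rintro (⟨hJ, habs⟩ | ⟨-, hq2, hsum⟩)
        · rcases (abs_eq (by norm_num : (0:ℤ) ≤ 1)).mp habs with h | h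
          · right; left; exact Prod.ext hJ.symm (show q.2 = -1 by omega)
          · left; exact Prod.ext hJ.symm (show q.2 = 1 by omega)
        · obtain ⟨k, b, hJ'⟩ := sum_abs_one J q.1 hsum
          right; right
          exact ⟨(k, b), Prod.ext hJ'.symm hq2.symm⟩
      · rintro (rfl | rfl | ⟨kb, rfl⟩)
        · exact Or.inl (by norm_num)
        · exact Or.inl (by norm_num)
        · exact Or.inr (by simpa [hf] using sum_abs_update J kb.1 kb.2)
    rw [hset, finsum_mem_coe_finset]
    have hmem1 : ((J, (1:ℤ))) ∉ insert ((J, (-1:ℤ))) (Finset.image f Finset.univ) := by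
      simp [hf, Prod.ext_iff]
    have hmem2 : ((J, (-1:ℤ))) ∉ Finset.image f Finset.univ := by
      simp [hf, Prod.ext_iff]
    rw [Finset.sum_insert hmem1, Finset.sum_insert hmem2,
      Finset.sum_image (fun a _ b _ h => hinj h)]
    have himg : ∀ kb : Fin d × Bool,
        Real.exp (-θ * |(((f kb).2 : ℤ) : ℝ)|) = 1 := by
      intro kb; simp [hf]
    rw [Finset.sum_congr rfl (fun kb _ => himg kb), Finset.sum_const]
    simp only [Finset.card_univ, Fintype.card_prod, Fintype.card_fin, Fintype.card_bool,
      smul_eq_mul, mul_one]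
    have h1 : |((1:ℤ):ℝ)| = 1 := by norm_num
    have h2 : |((-1:ℤ):ℝ)| = 1 := by norm_num
    have h0 : |((0:ℤ):ℝ)| = 0 := by norm_num
    rw [h1, h2, h0, mul_one, mul_zero, Real.exp_zero, mul_one, hexpneg]
    push_cast
    ring
  · have hset : {q : (Fin d → ℤ) × ℤ | CombAdj (J, x) q}
        = ↑({(J, x - 1), (J, x + 1)} : Finset ((Fin d → ℤ) × ℤ)) := by
      ext q
      simp only [Set.mem_setOf_eq, CombAdj, Finset.coe_insert, Set.mem_insert_iff,
        Finset.coe_singleton, Set.mem_singleton_iff]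
      constructor
      · rintro (⟨hJ, habs⟩ | ⟨hx0, -, -⟩)
        · rcases (abs_eq (by norm_num : (0:ℤ) ≤ 1)).mp habs with h | h
          · left; exact Prod.ext hJ.symm (show q.2 = x - 1 by omega)
          · right; exact Prod.ext hJ.symm (show q.2 = x + 1 by omega)
        · exact absurd hx0 hx
      · rintro (rfl | rfl)
        · exact Or.inl (by norm_num)
        · exact Or.inl (by norm_num)
    rw [hset, finsum_mem_coe_finset,
      Finset.sum_pair (by simp [Prod.ext_iff]; omega)]
    push_cast
    rcases lt_or_gt_of_ne hx with hneg | hpos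
    · have hx1 : x ≤ -1 := by omega
      have hr : ((x:ℝ)) ≤ -1 := by exact_mod_cast hx1
      rw [abs_of_nonpos (by linarith : (x:ℝ) - 1 ≤ 0),
        abs_of_nonpos (by linarith : (x:ℝ) + 1 ≤ 0),
        abs_of_nonpos (by linarith : (x:ℝ) ≤ 0)]
      rw [show -θ * -((x:ℝ) - 1) = -θ + -θ * -(x:ℝ) by ring,
        show -θ * -((x:ℝ) + 1) = θ + -θ * -(x:ℝ) by ring,
        Real.exp_add, Real.exp_add]
      linear_combination Real.exp (-θ * -(x:ℝ)) * hcosh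
    · have hx1 : (1:ℤ) ≤ x := hpos
      have hr : (1:ℝ) ≤ (x:ℝ) := by exact_mod_cast hx1
      rw [abs_of_nonneg (by linarith : (0:ℝ) ≤ (x:ℝ) - 1),
        abs_of_nonneg (by linarith : (0:ℝ) ≤ (x:ℝ) + 1),
        abs_of_nonneg (by linarith : (0:ℝ) ≤ (x:ℝ))]
      rw [show -θ * ((x:ℝ) - 1) = θ + -θ * (x:ℝ) by ring,
        show -θ * ((x:ℝ) + 1) = -θ + -θ * (x:ℝ) by ring,
        Real.exp_add, Real.exp_add]
      linear_combination Real.exp (-θ * (x:ℝ)) * hcosh
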